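/- Let t, k, l be integers with t ≥ 3, k ≥ 3, and l > t (so l ≥ t + 1 ≥ 4). Then the three-color Ramsey number satisfies R(t, k, l) > (t + 1) · (R(k, l − t + 1) − 1). -/

import Mathlib

/-- A coloring `χ` of the edges of the complete graph on `V` contains a
monochromatic `K_m` of color `c`: there are `m` vertices all of whose
pairwise edges receive color `c`. -/
def HasMonoClique {V C : Type*} (χ : V → V → C) (c : C) (m : ℕ) : Prop :=
  ∃ s : Finset V, s.card = m ∧ ∀ u ∈ s, ∀ v ∈ s, u ≠ v → χ u v = c

/-- `N` satisfies the multicolor Ramsey property for clique sizes `k : Fin r → ℕ`: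
every symmetric `r`-coloring of the edges of `K_N` contains, for some color `i`,
a monochromatic `K_{k i}` of color `i`. -/
def RamseyProp (r : ℕ) (k : Fin r → ℕ) (N : ℕ) : Prop :=
  ∀ χ : Fin N → Fin N → Fin r, (∀ u v, χ u v = χ v u) →
    ∃ i : Fin r, HasMonoClique χ i (k i)

/-- `N` is the multicolor Ramsey number `R(k 0, …, k (r-1))`: the least positive
integer with the Ramsey property. -/
def IsRamseyNumber (r : ℕ) (k : Fin r → ℕ) (N : ℕ) : Prop :=
  0 < N ∧ RamseyProp r k N ∧ ∀ M, 0 < M → RamseyProp r k M → N ≤ M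

namespace RamseyAux

variable {t m : ℕ}

/-- The block/fiber 3-coloring built from a base 2-coloring `χ₀`. -/
def Fc (χ₀ : Fin m → Fin m → Fin 2) (u v : Fin (t+1) × Fin m) : Fin 3 :=
  if u.2.val = v.2.val then
    (if (u.1.val + 1 = v.1.val ∧ u.1.val % 2 = 0) ∨ (v.1.val + 1 = u.1.val ∧ v.1.val % 2 = 0)
      then 2 else 0)
  else if (χ₀ u.2 v.2).val = 0 then 1
  else if u.1.val = v.1.val then 2
  else if u.1.val + 1 = v.1.val then (if u.2.val < v.2.val then 2 else 0)
  else if v.1.val + 1 = u.1.val then (if v.2.val < u.2.val then 2 else 0)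
  else 2

lemma Fc_symm (χ₀ : Fin m → Fin m → Fin 2) (hs : ∀ x y, χ₀ x y = χ₀ y x)
    (u v : Fin (t+1) × Fin m) : Fc χ₀ u v = Fc χ₀ v u := by
  unfold Fc
  rw [hs u.2 v.2]
  split_ifs <;> first | rfl | omega

lemma Fc_eq_one {χ₀ : Fin m → Fin m → Fin 2} {u v : Fin (t+1) × Fin m}
    (h : Fc χ₀ u v = 1) : u.2.val ≠ v.2.val ∧ χ₀ u.2 v.2 = 0 := by
  unfold Fc at h
  by_cases h1 : u.2.val = v.2.val
  · rw [if_pos h1] at h; split_ifs at h <;> exact absurd h (by decide)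
  · rw [if_neg h1] at h
    by_cases h2 : (χ₀ u.2 v.2).val = 0
    · exact ⟨h1, Fin.ext h2⟩
    · rw [if_neg h2] at h; split_ifs at h <;> exact absurd h (by decide)

lemma Fc_same_two {χ₀ : Fin m → Fin m → Fin 2} {u v : Fin (t+1) × Fin m}
    (h1 : u.2.val = v.2.val) (h : Fc χ₀ u v = 2) :
    (u.1.val + 1 = v.1.val ∧ u.1.val % 2 = 0) ∨ (v.1.val + 1 = u.1.val ∧ v.1.val % 2 = 0) := by
  unfold Fc at h
  rw [if_pos h1] at h
  by_contra hc
  rw [if_neg hc] at h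
  exact absurd h (by decide)

lemma Fc_same_zero {χ₀ : Fin m → Fin m → Fin 2} {u v : Fin (t+1) × Fin m}
    (h1 : u.2.val = v.2.val) (h : Fc χ₀ u v = 0) :
    ¬((u.1.val + 1 = v.1.val ∧ u.1.val % 2 = 0) ∨ (v.1.val + 1 = u.1.val ∧ v.1.val % 2 = 0)) := by
  unfold Fc at h
  rw [if_pos h1] at h
  intro hc
  rw [if_pos hc] at h
  exact absurd h (by decide)

lemma Fc_diff_two {χ₀ : Fin m → Fin m → Fin 2} {u v : Fin (t+1) × Fin m}
    (h1 : u.2.val ≠ v.2.val) (h : Fc χ₀ u v = 2) :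
    χ₀ u.2 v.2 = 1 ∧ (u.1.val + 1 = v.1.val → u.2.val < v.2.val) ∧
      (v.1.val + 1 = u.1.val → v.2.val < u.2.val) := by
  unfold Fc at h
  rw [if_neg h1] at h
  by_cases h2 : (χ₀ u.2 v.2).val = 0
  · rw [if_pos h2] at h; exact absurd h (by decide)
  · rw [if_neg h2] at h
    have hχ : χ₀ u.2 v.2 = 1 := by
      have := (χ₀ u.2 v.2).isLt
      exact Fin.ext (by omega)
    refine ⟨hχ, ?_, ?_⟩
    · intro hadj
      have hne : ¬(u.1.val = v.1.val) := by omega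
      rw [if_neg hne, if_pos hadj] at h
      by_contra hlt
      rw [if_neg hlt] at h
      exact absurd h (by decide)
    · intro hadj
      have hne : ¬(u.1.val = v.1.val) := by omega
      have hadj' : ¬(u.1.val + 1 = v.1.val) := by omega
      rw [if_neg hne, if_neg hadj', if_pos hadj] at h
      by_contra hlt
      rw [if_neg hlt] at h
      exact absurd h (by decide)

lemma Fc_diff_zero {χ₀ : Fin m → Fin m → Fin 2} {u v : Fin (t+1) × Fin m}
    (h1 : u.2.val ≠ v.2.val) (h : Fc χ₀ u v = 0) :
    (u.1.val + 1 = v.1.val ∧ ¬(u.2.val < v.2.val)) ∨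
      (v.1.val + 1 = u.1.val ∧ ¬(v.2.val < u.2.val)) := by
  unfold Fc at h
  rw [if_neg h1] at h
  by_cases h2 : (χ₀ u.2 v.2).val = 0
  · rw [if_pos h2] at h; exact absurd h (by decide)
  · rw [if_neg h2] at h
    by_cases h3 : u.1.val = v.1.val
    · rw [if_pos h3] at h; exact absurd h (by decide)
    · rw [if_neg h3] at h
      by_cases h4 : u.1.val + 1 = v.1.val
      · rw [if_pos h4] at h
        by_cases h5 : u.2.val < v.2.val
        · rw [if_pos h5] at h; exact absurd h (by decide)
        · exact Or.inl ⟨h4, h5⟩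
      · rw [if_neg h4] at h
        by_cases h6 : v.1.val + 1 = u.1.val
        · rw [if_pos h6] at h
          by_cases h7 : v.2.val < u.2.val
          · rw [if_pos h7] at h; exact absurd h (by decide)
          · exact Or.inr ⟨h6, h7⟩
        · rw [if_neg h6] at h; exact absurd h (by decide)

lemma hasMono_comp {V W C : Type*} {f : V → W} (hf : Function.Injective f)
    {χ : W → W → C} {c : C} {n : ℕ}
    (h : HasMonoClique (fun a b => χ (f a) (f b)) c n) : HasMonoClique χ c n := by
  classical
  obtain ⟨s, hcard, hmono⟩ := h
  refine ⟨s.image f, by rw [Finset.card_image_of_injective _ hf, hcard], ?_⟩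
  intro x hx y hy hxy
  obtain ⟨a, ha, rfl⟩ := Finset.mem_image.mp hx
  obtain ⟨b, hb, rfl⟩ := Finset.mem_image.mp hy
  exact hmono a ha b hb (fun hab => hxy (congrArg f hab))

lemma ramsey_mono {r : ℕ} {kk : Fin r → ℕ} {N N' : ℕ}
    (h : RamseyProp r kk N) (hle : N ≤ N') : RamseyProp r kk N' := by
  intro χ hsym
  obtain ⟨i, hcl⟩ := h (fun a b => χ (Fin.castLE hle a) (Fin.castLE hle b))
    (fun a b => hsym _ _)
  exact ⟨i, hasMono_comp (Fin.castLE_injective hle) hcl⟩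

lemma noRed (χ₀ : Fin m → Fin m → Fin 2) (ht : 3 ≤ t) :
    ¬ HasMonoClique (Fc (t := t) χ₀) 0 t := by
  classical
  rintro ⟨S, hcard, hmono⟩
  by_cases hsf : ∃ u ∈ S, ∃ v ∈ S, u ≠ v ∧ u.2 = v.2
  · obtain ⟨u, hu, v, hv, huv, hfib⟩ := hsf
    by_cases hof : ∃ w ∈ S, w.2 ≠ u.2
    · obtain ⟨w, hw, hwf⟩ := hof
      have hvw : v ≠ w := by rintro rfl; exact hwf hfib.symm
      have huw : u ≠ w := by rintro rfl; exact hwf rfl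
      have e1 : u.2.val ≠ w.2.val := fun h => hwf (Fin.val_injective h).symm
      have e2 : v.2.val ≠ w.2.val := fun h =>
        hwf ((hfib.trans (Fin.val_injective h)).symm)
      have r1 := Fc_diff_zero e1 (hmono u hu w hw huw)
      have r2 := Fc_diff_zero e2 (hmono v hv w hw hvw)
      have efib : u.2.val = v.2.val := congrArg Fin.val hfib
      have hne : u.1.val ≠ v.1.val := by
        intro h
        exact huv (Prod.ext (Fin.val_injective h) hfib)
      omega
    · push_neg at hof
      have hle : S.card ≤ (Finset.range (t / 2 + 1)).card := by
        apply Finset.card_le_card_of_injOn (fun w => w.1.val / 2)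
        · intro w hw
          have := w.1.isLt
          exact Finset.mem_range.mpr (by dsimp only; omega)
        · intro w1 hw1 w2 hw2 heq
          by_contra hne
          have hf1 : w1.2 = u.2 := hof w1 hw1
          have hf2 : w2.2 = u.2 := hof w2 hw2
          have hfe : w1.2.val = w2.2.val := by rw [hf1, hf2]
          have hr := Fc_same_zero hfe (hmono w1 hw1 w2 hw2 hne)
          have hbne : w1.1.val ≠ w2.1.val := by
            intro h
            exact hne (Prod.ext (Fin.val_injective h) (hf1.trans hf2.symm))
          simp only at heq
          omega
      rw [Finset.card_range, hcard] at hle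
      omega
  · push_neg at hsf
    have h3 : 3 ≤ S.card := by omega
    obtain ⟨S3, hsub, hc3⟩ := Finset.exists_subset_card_eq h3
    rw [Finset.card_eq_three] at hc3
    obtain ⟨a, b, c, hab, hac, hbc, rfl⟩ := hc3
    have ha : a ∈ S := hsub (by simp)
    have hb : b ∈ S := hsub (by simp)
    have hc : c ∈ S := hsub (by simp)
    have fab : a.2.val ≠ b.2.val := fun h => hsf a ha b hb hab (Fin.val_injective h)
    have fac : a.2.val ≠ c.2.val := fun h => hsf a ha c hc hac (Fin.val_injective h)
    have fbc : b.2.val ≠ c.2.val := fun h => hsf b hb c hc hbc (Fin.val_injective h)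
    have r1 := Fc_diff_zero fab (hmono a ha b hb hab)
    have r2 := Fc_diff_zero fac (hmono a ha c hc hac)
    have r3 := Fc_diff_zero fbc (hmono b hb c hc hbc)
    omega

lemma noGreen {k : ℕ} (χ₀ : Fin m → Fin m → Fin 2)
    (hno : ¬ HasMonoClique χ₀ 0 k) : ¬ HasMonoClique (Fc (t := t) χ₀) 1 k := by
  classical
  rintro ⟨S, hcard, hmono⟩
  apply hno
  have hinj : Set.InjOn Prod.snd (S : Set (Fin (t+1) × Fin m)) := by
    intro u hu v hv h2
    by_contra hne
    exact (Fc_eq_one (hmono u hu v hv hne)).1 (congrArg Fin.val h2)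
  refine ⟨S.image Prod.snd, by rw [Finset.card_image_of_injOn hinj, hcard], ?_⟩
  intro x hx y hy hxy
  obtain ⟨u, hu, rfl⟩ := Finset.mem_image.mp hx
  obtain ⟨v, hv, rfl⟩ := Finset.mem_image.mp hy
  have hne : u ≠ v := fun h => hxy (congrArg Prod.snd h)
  exact (Fc_eq_one (hmono u hu v hv hne)).2

lemma noBlue {l : ℕ} (χ₀ : Fin m → Fin m → Fin 2) (ht : 3 ≤ t) (hlt : t < l)
    (hno : ¬ HasMonoClique χ₀ 1 (l - t + 1)) :
    ¬ HasMonoClique (Fc (t := t) χ₀) 2 l := by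
  classical
  rintro ⟨S, hcard, hmono⟩
  set Fib := S.image Prod.snd with hFibdef
  have hsum : S.card = ∑ x ∈ Fib, (S.filter fun u => u.2 = x).card :=
    Finset.card_eq_sum_card_fiberwise (fun u hu => Finset.mem_image_of_mem _ hu)
  -- each fiber class has at most 2 elements
  have hA2 : ∀ x : Fin m, (S.filter fun u => u.2 = x).card ≤ 2 := by
    intro x
    by_contra hcge
    push_neg at hcge
    obtain ⟨S3, hsub, hc3⟩ := Finset.exists_subset_card_eq (s := S.filter fun u => u.2 = x) (n := 3) (by omega)
    rw [Finset.card_eq_three] at hc3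
    obtain ⟨a, b, c, hab, hac, hbc, rfl⟩ := hc3
    have ha := Finset.mem_filter.mp (hsub (by simp : a ∈ ({a,b,c} : Finset _)))
    have hb := Finset.mem_filter.mp (hsub (by simp : b ∈ ({a,b,c} : Finset _)))
    have hc := Finset.mem_filter.mp (hsub (by simp : c ∈ ({a,b,c} : Finset _)))
    have fab : a.2.val = b.2.val := by rw [ha.2, hb.2]
    have fac : a.2.val = c.2.val := by rw [ha.2, hc.2]
    have fbc : b.2.val = c.2.val := by rw [hb.2, hc.2]
    have r1 := Fc_same_two fab (hmono a ha.1 b hb.1 hab)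
    have r2 := Fc_same_two fac (hmono a ha.1 c hc.1 hac)
    have r3 := Fc_same_two fbc (hmono b hb.1 c hc.1 hbc)
    have nab : a.1.val ≠ b.1.val := by
      intro h; exact hab (Prod.ext (Fin.val_injective h) (ha.2.trans hb.2.symm))
    have nac : a.1.val ≠ c.1.val := by
      intro h; exact hac (Prod.ext (Fin.val_injective h) (ha.2.trans hc.2.symm))
    have nbc : b.1.val ≠ c.1.val := by
      intro h; exact hbc (Prod.ext (Fin.val_injective h) (hb.2.trans hc.2.symm))
    omega
  -- distinct fibers are pairwise blue in the base
  have hFibBlue : ∀ x ∈ Fib, ∀ y ∈ Fib, x ≠ y → χ₀ x y = 1 := by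
    intro x hx y hy hxy
    obtain ⟨u, hu, rfl⟩ := Finset.mem_image.mp hx
    obtain ⟨v, hv, rfl⟩ := Finset.mem_image.mp hy
    have hne : u ≠ v := fun h => hxy (congrArg Prod.snd h)
    exact (Fc_diff_two (fun h => hxy (Fin.val_injective h)) (hmono u hu v hv hne)).1
  have hFible : Fib.card ≤ l - t := by
    by_contra hgt
    push_neg at hgt
    obtain ⟨Q, hQsub, hQcard⟩ := Finset.exists_subset_card_eq (s := Fib) (n := l - t + 1) (by omega)
    exact hno ⟨Q, hQcard, fun x hx y hy hxy => hFibBlue x (hQsub hx) y (hQsub hy) hxy⟩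
  set D := Fib.filter (fun x => 2 ≤ (S.filter fun u => u.2 = x).card) with hDdef
  -- description of the doubled classes
  have key : ∀ x ∈ D, ∃ c : ℕ, c % 2 = 0 ∧ c + 1 ≤ t ∧
      (∃ u ∈ S, u.2 = x ∧ u.1.val = c) ∧ (∃ u ∈ S, u.2 = x ∧ u.1.val = c + 1) ∧
      (S.filter fun u => u.2 = x).sup (fun u => u.1.val / 2) = c / 2 := by
    intro x hx
    have hx' := Finset.mem_filter.mp hx
    have h2 : (S.filter fun u => u.2 = x).card = 2 := le_antisymm (hA2 x) hx'.2
    obtain ⟨u1, u2, hne, heq⟩ := Finset.card_eq_two.mp h2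
    have hu1 := Finset.mem_filter.mp (heq ▸ Finset.mem_insert_self u1 {u2})
    have hu2 := Finset.mem_filter.mp
      (heq ▸ Finset.mem_insert_of_mem (Finset.mem_singleton_self u2))
    have hvals : u1.2.val = u2.2.val := by rw [hu1.2, hu2.2]
    have r := Fc_same_two hvals (hmono u1 hu1.1 u2 hu2.1 hne)
    have hsup : (S.filter fun u => u.2 = x).sup (fun u => u.1.val / 2)
        = u1.1.val / 2 ⊔ u2.1.val / 2 := by
      rw [heq, Finset.sup_insert, Finset.sup_singleton]
    rcases r with ⟨h1, h2e⟩ | ⟨h1, h2e⟩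
    · refine ⟨u1.1.val, h2e, by have := u2.1.isLt; omega,
        ⟨u1, hu1.1, hu1.2, rfl⟩, ⟨u2, hu2.1, hu2.2, by omega⟩, ?_⟩
      rw [hsup]
      have hq : u2.1.val / 2 = u1.1.val / 2 := by omega
      rw [hq, sup_idem]
    · refine ⟨u2.1.val, h2e, by have := u1.1.isLt; omega,
        ⟨u2, hu2.1, hu2.2, rfl⟩, ⟨u1, hu1.1, hu1.2, by omega⟩, ?_⟩
      rw [hsup]
      have hq : u1.1.val / 2 = u2.1.val / 2 := by omega
      rw [hq, sup_idem]
  have hDle : D.card ≤ t / 2 + 1 := by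
    have hcr : (Finset.range (t / 2 + 1)).card = t / 2 + 1 := Finset.card_range _
    rw [← hcr]
    apply Finset.card_le_card_of_injOn
      (fun x => (S.filter fun u => u.2 = x).sup (fun u => u.1.val / 2))
    · intro x hx
      obtain ⟨c, hc0, hc1, _, _, hsx⟩ := key x hx
      show (S.filter fun u => u.2 = x).sup (fun u => u.1.val / 2) ∈ _
      rw [hsx]
      exact Finset.mem_range.mpr (by omega)
    · intro x hx y hy hxy
      by_contra hne
      obtain ⟨c, hc0, hc1, ⟨ulo, hulo, hulo2, huloval⟩, ⟨uhi, huhi, huhi2, huhival⟩, hsx⟩ :=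
        key x hx
      obtain ⟨d, hd0, hd1, ⟨vlo, hvlo, hvlo2, hvloval⟩, ⟨vhi, hvhi, hvhi2, hvhival⟩, hsy⟩ :=
        key y hy
      have hxy' : (S.filter fun u => u.2 = x).sup (fun u => u.1.val / 2)
          = (S.filter fun u => u.2 = y).sup (fun u => u.1.val / 2) := hxy
      rw [hsx, hsy] at hxy'
      have hcd : c = d := by omega
      clear hxy
      have hfne1 : uhi.2.val ≠ vlo.2.val := by
        rw [huhi2, hvlo2]; exact fun h => hne (Fin.val_injective h)
      have hfne2 : ulo.2.val ≠ vhi.2.val := by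
        rw [hulo2, hvhi2]; exact fun h => hne (Fin.val_injective h)
      have hne1 : uhi ≠ vlo := fun h => hfne1 (by rw [h])
      have hne2 : ulo ≠ vhi := fun h => hfne2 (by rw [h])
      have m1 := (Fc_diff_two hfne1 (hmono uhi huhi vlo hvlo hne1)).2.2 (by omega)
      have m2 := (Fc_diff_two hfne2 (hmono ulo hulo vhi hvhi hne2)).2.1 (by omega)
      -- m1 : vlo.2.val < uhi.2.val  (y < x), m2 : ulo.2.val < vhi.2.val (x < y)
      have ex : ulo.2.val = uhi.2.val := by rw [hulo2, huhi2]
      have ey : vlo.2.val = vhi.2.val := by rw [hvlo2, hvhi2]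
      omega
  have hsum2 : S.card ≤ Fib.card + D.card := by
    calc S.card = ∑ x ∈ Fib, (S.filter fun u => u.2 = x).card := hsum
      _ ≤ ∑ x ∈ Fib, (1 + if 2 ≤ (S.filter fun u => u.2 = x).card then 1 else 0) := by
          apply Finset.sum_le_sum
          intro x hx
          have := hA2 x
          split_ifs with h <;> omega
      _ = Fib.card + D.card := by
          rw [Finset.sum_add_distrib, Finset.sum_const, smul_eq_mul, mul_one,
            hDdef, Finset.card_filter]
  omega

end RamseyAux

open RamseyAux in
/-- For `t ≥ 3`, `k ≥ 3`, `l > t`: `R(t, k, l) > (t + 1) * (R(k, l - t + 1) - 1)`. -/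
theorem ramsey_three_color_lower_bound (t k l : ℕ) (ht : 3 ≤ t) (hk : 3 ≤ k)
    (hl : t < l) (N M : ℕ)
    (hN : IsRamseyNumber 3 ![t, k, l] N)
    (hM : IsRamseyNumber 2 ![k, l - t + 1] M) :
    (t + 1) * (M - 1) < N := by
  obtain ⟨hNpos, hNprop, hNmin⟩ := hN
  obtain ⟨hMpos, hMprop, hMmin⟩ := hM
  have hnoM : ¬ RamseyProp 2 ![k, l - t + 1] (M - 1) := by
    intro hprop
    rcases Nat.lt_or_ge 1 M with hM2 | hM1
    · exact absurd (hMmin (M - 1) (by omega) hprop) (by omega)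
    · have h0 : M - 1 = 0 := by omega
      rw [h0] at hprop
      obtain ⟨i, s, hcardS, _⟩ := hprop (fun _ _ => 0) (fun _ _ => rfl)
      have hs0 : s.card = 0 := Nat.le_zero.mp
        (le_trans (Finset.card_le_univ s) (by simp))
      fin_cases i <;> simp_all
  rw [RamseyProp] at hnoM
  push_neg at hnoM
  obtain ⟨χ₀, hsym0, hno⟩ := hnoM
  have hnoG : ¬ HasMonoClique χ₀ 0 k := by simpa using hno 0
  have hnoB : ¬ HasMonoClique χ₀ 1 (l - t + 1) := by simpa using hno 1
  by_contra hcon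
  push_neg at hcon
  have hprop' : RamseyProp 3 ![t, k, l] ((t + 1) * (M - 1)) := ramsey_mono hNprop hcon
  obtain ⟨i, hclique⟩ := hprop'
    (fun a b => Fc χ₀ (finProdFinEquiv.symm a) (finProdFinEquiv.symm b))
    (fun a b => Fc_symm χ₀ hsym0 _ _)
  have hclique' : HasMonoClique (Fc (t := t) χ₀) i (![t, k, l] i) :=
    hasMono_comp finProdFinEquiv.symm.injective hclique
  fin_cases i
  · exact noRed χ₀ ht (by simpa using hclique')
  · exact noGreen χ₀ hnoG (by simpa using hclique')
  · exact noBlue χ₀ ht hl hnoB (by simpa using hclique')
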